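/- Let J be a stable, regular J-class of a semigroup S, and let N be a normal subgroup of a maximal subgroup (group H-class) contained in J. Then the relation ν_N = {(sxt, syt) ∈ J × J : x, y ∈ N, s, t ∈ S¹} is contained in Green's H relation and is an equivalence relation on J. -/

import Mathlib

namespace SG

variable {S : Type*} [Semigroup S]

/-- An ideal of a semigroup: a nonempty subset closed under left and right
multiplication by arbitrary elements. -/
def IsIdeal (I : Set S) : Prop :=
  I.Nonempty ∧ ∀ x ∈ I, ∀ a : S, a * x ∈ I ∧ x * a ∈ I

/-- The minimal ideal: an ideal contained in every ideal. -/
def IsMinIdeal (M : Set S) : Prop :=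
  IsIdeal M ∧ ∀ I : Set S, IsIdeal I → M ⊆ I

/-- Every element of the set is regular. -/
def RegularSet (M : Set S) : Prop := ∀ m ∈ M, ∃ y : S, m * y * m = m

/-- `f` is a retraction of the ideal `I` onto the minimal ideal `M`:
a homomorphism `I → M` fixing `M` pointwise. -/
def IsRetraction (I M : Set S) (f : S → S) : Prop :=
  (∀ x ∈ I, f x ∈ M) ∧ (∀ x ∈ I, ∀ y ∈ I, f (x * y) = f x * f y) ∧ ∀ x ∈ M, f x = x

/-- Green's R relation (via S¹ = `WithOne S`). -/
def GreenR (a b : S) : Prop :=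
  (∃ u : WithOne S, (a : WithOne S) * u = (b : WithOne S)) ∧
    ∃ v : WithOne S, (b : WithOne S) * v = (a : WithOne S)

/-- Green's L relation. -/
def GreenL (a b : S) : Prop :=
  (∃ u : WithOne S, u * (a : WithOne S) = (b : WithOne S)) ∧
    ∃ v : WithOne S, v * (b : WithOne S) = (a : WithOne S)

/-- Green's J relation. -/
def GreenJ (a b : S) : Prop :=
  (∃ u v : WithOne S, u * (a : WithOne S) * v = (b : WithOne S)) ∧
    ∃ u v : WithOne S, u * (b : WithOne S) * v = (a : WithOne S)

/-- Green's H relation. -/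
def GreenH (a b : S) : Prop := GreenR a b ∧ GreenL a b

/-- Green's D relation, as R ∘ L. -/
def GreenD (a b : S) : Prop := ∃ c : S, GreenR a c ∧ GreenL c b

/-- A set is stable if for its elements `x`: `xa J x → xa R x` and `ax J x → ax L x`. -/
def StableSet (J : Set S) : Prop :=
  ∀ x ∈ J, ∀ a : S, (GreenJ (x * a) x → GreenR (x * a) x) ∧ (GreenJ (a * x) x → GreenL (a * x) x)

/-- The set is a J-class. -/
def IsJClass (J : Set S) : Prop := ∃ a : S, J = {b | GreenJ a b}

/-- The set is a D-class. -/
def IsDClass (J : Set S) : Prop := ∃ a : S, J = {b | GreenD a b}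

/-- A binary relation is a congruence on the semigroup. -/
def IsCongruence (r : S → S → Prop) : Prop :=
  Equivalence r ∧ ∀ a b c : S, r a b → r (c * a) (c * b) ∧ r (a * c) (b * c)

/-- `N` is a normal subgroup of the subgroup `G` of `S` with identity `e`. -/
def IsNormalIn (N G : Set S) (e : S) : Prop :=
  N ⊆ G ∧ e ∈ N ∧ (∀ x ∈ N, ∀ y ∈ N, x * y ∈ N) ∧
    (∀ x ∈ N, ∃ y ∈ N, x * y = e ∧ y * x = e) ∧
    ∀ g ∈ G, ∀ g' ∈ G, g * g' = e → g' * g = e → ∀ x ∈ N, g * x * g' ∈ N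

/-- The relation ν_N = S¹(N × N)S¹ ∩ (J × J). -/
def Nu (J N : Set S) (a b : S) : Prop :=
  a ∈ J ∧ b ∈ J ∧ ∃ x ∈ N, ∃ y ∈ N, ∃ s t : WithOne S,
    s * (x : WithOne S) * t = (a : WithOne S) ∧ s * (y : WithOne S) * t = (b : WithOne S)

/-- `J` is disjoint from `I` and is minimal among the J-classes of `S \ I`. -/
def MinimalJClassOutside (J I : Set S) : Prop :=
  (∀ a ∈ J, a ∉ I) ∧
    ∀ b : S, b ∉ I →
      (∃ a ∈ J, ∃ u v : WithOne S, u * (a : WithOne S) * v = (b : WithOne S)) → b ∈ J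

end SG

section SGAux

open SG

variable {S : Type*} [Semigroup S]

private lemma sg_coeR (w : S) (t : WithOne S) :
    ∃ z : S, (w : WithOne S) * t = (z : WithOne S) := by
  induction t using WithOne.recOneCoe with
  | one => exact ⟨w, mul_one _⟩
  | coe t => exact ⟨w * t, (WithOne.coe_mul w t).symm⟩

private lemma sg_coeL (w : S) (s : WithOne S) :
    ∃ z : S, s * (w : WithOne S) = (z : WithOne S) := by
  induction s using WithOne.recOneCoe with
  | one => exact ⟨w, one_mul _⟩
  | coe s => exact ⟨s * w, (WithOne.coe_mul s w).symm⟩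

private lemma sg_rrefl (a : S) : GreenR a a := ⟨⟨1, mul_one _⟩, ⟨1, mul_one _⟩⟩

private lemma sg_rsymm {a b : S} (h : GreenR a b) : GreenR b a := ⟨h.2, h.1⟩

private lemma sg_rtrans {a b c : S} (h1 : GreenR a b) (h2 : GreenR b c) : GreenR a c := by
  obtain ⟨⟨u, hu⟩, ⟨v, hv⟩⟩ := h1
  obtain ⟨⟨u', hu'⟩, ⟨v', hv'⟩⟩ := h2
  exact ⟨⟨u * u', by rw [← mul_assoc, hu, hu']⟩, ⟨v' * v, by rw [← mul_assoc, hv', hv]⟩⟩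

private lemma sg_lrefl (a : S) : GreenL a a := ⟨⟨1, one_mul _⟩, ⟨1, one_mul _⟩⟩

private lemma sg_lsymm {a b : S} (h : GreenL a b) : GreenL b a := ⟨h.2, h.1⟩

private lemma sg_ltrans {a b c : S} (h1 : GreenL a b) (h2 : GreenL b c) : GreenL a c := by
  obtain ⟨⟨u, hu⟩, ⟨v, hv⟩⟩ := h1
  obtain ⟨⟨u', hu'⟩, ⟨v', hv'⟩⟩ := h2
  exact ⟨⟨u' * u, by rw [mul_assoc, hu, hu']⟩, ⟨v * v', by rw [mul_assoc, hv', hv]⟩⟩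

private lemma sg_jsymm {a b : S} (h : GreenJ a b) : GreenJ b a := ⟨h.2, h.1⟩

private lemma sg_jtrans {a b c : S} (h1 : GreenJ a b) (h2 : GreenJ b c) : GreenJ a c := by
  obtain ⟨⟨u, v, huv⟩, ⟨p, q, hpq⟩⟩ := h1
  obtain ⟨⟨u', v', huv'⟩, ⟨p', q', hpq'⟩⟩ := h2
  refine ⟨⟨u' * u, v * v', ?_⟩, ⟨p * p', q' * q, ?_⟩⟩
  · rw [← huv', ← huv]; simp only [mul_assoc]
  · rw [← hpq, ← hpq']; simp only [mul_assoc]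

private lemma sg_RtoJ {a b : S} (h : GreenR a b) : GreenJ a b := by
  obtain ⟨⟨u, hu⟩, ⟨v, hv⟩⟩ := h
  exact ⟨⟨1, u, by rw [one_mul, hu]⟩, ⟨1, v, by rw [one_mul, hv]⟩⟩

private lemma sg_HtoJ {a b : S} (h : GreenH a b) : GreenJ a b := sg_RtoJ h.1

private lemma sg_hsymm {a b : S} (h : GreenH a b) : GreenH b a := ⟨sg_rsymm h.1, sg_lsymm h.2⟩

/-- L is a right congruence, in translated form. -/
private lemma sg_lcong {p q z₁ z₂ : S} (t : WithOne S) (h : GreenL p q)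
    (h1 : (p : WithOne S) * t = z₁) (h2 : (q : WithOne S) * t = z₂) : GreenL z₁ z₂ := by
  obtain ⟨⟨u, hu⟩, ⟨v, hv⟩⟩ := h
  exact ⟨⟨u, by rw [← h1, ← mul_assoc, hu, h2]⟩, ⟨v, by rw [← h2, ← mul_assoc, hv, h1]⟩⟩

/-- R is a left congruence, in translated form. -/
private lemma sg_rcong {p q z₁ z₂ : S} (s : WithOne S) (h : GreenR p q)
    (h1 : s * (p : WithOne S) = z₁) (h2 : s * (q : WithOne S) = z₂) : GreenR z₁ z₂ := by
  obtain ⟨⟨u, hu⟩, ⟨v, hv⟩⟩ := h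
  exact ⟨⟨u, by rw [← h1, mul_assoc, hu, h2]⟩, ⟨v, by rw [← h2, mul_assoc, hv, h1]⟩⟩

end SGAux


/-- Let `J` be a stable regular J-class of a semigroup `S` and `N` a
normal subgroup of a maximal subgroup (the group `H`-class of an idempotent `e ∈ J`).
Then `ν_N` is contained in Green's `H` relation and is an equivalence relation on `J`. -/
theorem stmt7 {S : Type*} [Semigroup S] (J N : Set S) (e : S)
    (hJ : SG.IsJClass J) (hs : SG.StableSet J) (hreg : SG.RegularSet J)
    (he : e * e = e) (heJ : e ∈ J)
    (hN : SG.IsNormalIn N {x : S | SG.GreenH x e} e) :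
    (∀ a b : S, SG.Nu J N a b → SG.GreenH a b) ∧
    (∀ a ∈ J, SG.Nu J N a a) ∧
    (∀ a b : S, SG.Nu J N a b → SG.Nu J N b a) ∧
    (∀ a b c : S, SG.Nu J N a b → SG.Nu J N b c → SG.Nu J N a c) := by

  classical
  obtain ⟨a₀, hJa⟩ := hJ
  -- basic facts about the J-class J
  have hJm : ∀ p ∈ J, ∀ q ∈ J, SG.GreenJ p q := by
    intro p hp q hq
    rw [hJa] at hp hq
    exact sg_jtrans (sg_jsymm hp) hq
  have hmemJ : ∀ p ∈ J, ∀ q : S, SG.GreenJ p q → q ∈ J := by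
    intro p hp q h
    rw [hJa] at hp ⊢
    exact sg_jtrans hp h
  have hone_or : ∀ u : WithOne S, u = 1 ∨ ∃ u₀ : S, u = (u₀ : WithOne S) := by
    intro u
    induction u using WithOne.recOneCoe with
    | one => exact Or.inl rfl
    | coe a => exact Or.inr ⟨a, rfl⟩
  -- identities in the H-class of e
  have hHid : ∀ h : S, SG.GreenH h e → e * h = h ∧ h * e = h := by
    intro h hh
    obtain ⟨⟨_, ⟨v, hv⟩⟩, ⟨_, ⟨w, hw⟩⟩⟩ := hh
    constructor
    · have : ((e * h : S) : WithOne S) = (h : WithOne S) := by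
        rw [WithOne.coe_mul, ← hv, ← mul_assoc, ← WithOne.coe_mul, he, hv]
      exact WithOne.coe_inj.mp this
    · have : ((h * e : S) : WithOne S) = (h : WithOne S) := by
        rw [WithOne.coe_mul, ← hw, mul_assoc, ← WithOne.coe_mul, he, hw]
      exact WithOne.coe_inj.mp this
  have hHrefl : SG.GreenH e e := ⟨sg_rrefl e, sg_lrefl e⟩
  -- inverses in the H-class of e
  have hHinv : ∀ h : S, SG.GreenH h e →
      ∃ h' : S, SG.GreenH h' e ∧ h * h' = e ∧ h' * h = e := by
    intro h hh
    obtain ⟨heh, hhe⟩ := hHid h hh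
    obtain ⟨⟨⟨u, hu⟩, -⟩, ⟨⟨v, hv⟩, -⟩⟩ := hh
    rcases hone_or u with rfl | ⟨u₀, rfl⟩
    · rw [mul_one] at hu
      have hhe' : h = e := WithOne.coe_inj.mp hu
      rw [hhe']
      exact ⟨e, hHrefl, he, he⟩
    · have hu' : h * u₀ = e := WithOne.coe_inj.mp (by rw [WithOne.coe_mul]; exact hu)
      refine ⟨e * u₀ * e, ?_, ?_, ?_⟩
      case refine_2 =>
        rw [← mul_assoc, ← mul_assoc, hhe, hu', he]
      case refine_3 =>
        have h2 : e * (e * u₀ * e) = e * u₀ * e := by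
          rw [← mul_assoc, ← mul_assoc, he]
        have e5 : h * (u₀ * e) = e := by rw [← mul_assoc, hu', he]
        have hcoe : ((e * u₀ * e : S) : WithOne S) = v * (e : WithOne S) := by
          calc ((e * u₀ * e : S) : WithOne S)
              = ((e * (u₀ * e) : S) : WithOne S) := by rw [mul_assoc]
            _ = (e : WithOne S) * ((u₀ * e : S) : WithOne S) := by rw [WithOne.coe_mul]
            _ = v * (h : WithOne S) * ((u₀ * e : S) : WithOne S) := by rw [hv]
            _ = v * ((h * (u₀ * e) : S) : WithOne S) := by rw [mul_assoc, ← WithOne.coe_mul]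
            _ = v * (e : WithOne S) := by rw [e5]
        apply WithOne.coe_inj.mp
        rw [WithOne.coe_mul, hcoe, mul_assoc, ← WithOne.coe_mul, heh, hv]
      case refine_1 =>
        have h1 : h * (e * u₀ * e) = e := by
          rw [← mul_assoc, ← mul_assoc, hhe, hu', he]
        have h2 : e * (e * u₀ * e) = e * u₀ * e := by
          rw [← mul_assoc, ← mul_assoc, he]
        have h3 : (e * u₀ * e) * e = e * u₀ * e := by
          rw [mul_assoc, he]
        have e5 : h * (u₀ * e) = e := by rw [← mul_assoc, hu', he]
        have hcoe : ((e * u₀ * e : S) : WithOne S) = v * (e : WithOne S) := by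
          calc ((e * u₀ * e : S) : WithOne S)
              = ((e * (u₀ * e) : S) : WithOne S) := by rw [mul_assoc]
            _ = (e : WithOne S) * ((u₀ * e : S) : WithOne S) := by rw [WithOne.coe_mul]
            _ = v * (h : WithOne S) * ((u₀ * e : S) : WithOne S) := by rw [hv]
            _ = v * ((h * (u₀ * e) : S) : WithOne S) := by rw [mul_assoc, ← WithOne.coe_mul]
            _ = v * (e : WithOne S) := by rw [e5]
        have h4 : (e * u₀ * e) * h = e := by
          apply WithOne.coe_inj.mp
          rw [WithOne.coe_mul, hcoe, mul_assoc, ← WithOne.coe_mul, heh, hv]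
        exact ⟨⟨⟨(h : WithOne S), by rw [← WithOne.coe_mul, h4]⟩,
                ⟨((e * u₀ * e : S) : WithOne S), by rw [← WithOne.coe_mul, h2]⟩⟩,
               ⟨⟨(h : WithOne S), by rw [← WithOne.coe_mul, h1]⟩,
                ⟨((e * u₀ * e : S) : WithOne S), by rw [← WithOne.coe_mul, h3]⟩⟩⟩
  -- products in the H-class of e
  have hHmul : ∀ h k : S, SG.GreenH h e → SG.GreenH k e → SG.GreenH (h * k) e := by
    intro h k hh hk
    obtain ⟨heh, hhe⟩ := hHid h hh
    obtain ⟨hek, hke⟩ := hHid k hk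
    obtain ⟨h', hh'H, hhh', hh'h⟩ := hHinv h hh
    obtain ⟨k', hk'H, hkk', hk'k⟩ := hHinv k hk
    obtain ⟨hek', hk'e⟩ := hHid k' hk'H
    have q1 : (h * k) * (k' * h') = e := by
      rw [mul_assoc h k (k' * h'), ← mul_assoc k k' h', hkk', ← mul_assoc h e h', hhe, hhh']
    have q2 : (k' * h') * (h * k) = e := by
      rw [mul_assoc k' h' (h * k), ← mul_assoc h' h k, hh'h, ← mul_assoc k' e k, hk'e, hk'k]
    have q3 : e * (h * k) = h * k := by rw [← mul_assoc, heh]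
    have q4 : (h * k) * e = h * k := by rw [mul_assoc, hke]
    exact ⟨⟨⟨((k' * h' : S) : WithOne S), by rw [← WithOne.coe_mul, q1]⟩,
            ⟨((h * k : S) : WithOne S), by rw [← WithOne.coe_mul, q3]⟩⟩,
           ⟨⟨((k' * h' : S) : WithOne S), by rw [← WithOne.coe_mul, q2]⟩,
            ⟨((h * k : S) : WithOne S), by rw [← WithOne.coe_mul, q4]⟩⟩⟩
  have hHsub : ∀ h : S, SG.GreenH h e → h ∈ J := by
    intro h hh
    exact hmemJ e heJ h (sg_jsymm (sg_HtoJ hh))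
  -- stability, in translated form
  have stabR : ∀ w ∈ J, ∀ z ∈ J, ∀ t : WithOne S,
      (w : WithOne S) * t = (z : WithOne S) → SG.GreenR z w := by
    intro w hw z hz t ht
    rcases hone_or t with rfl | ⟨t₀, rfl⟩
    · rw [mul_one] at ht
      obtain rfl : w = z := WithOne.coe_inj.mp ht
      exact sg_rrefl w
    · have hz' : w * t₀ = z := WithOne.coe_inj.mp (by rw [WithOne.coe_mul]; exact ht)
      subst hz'
      exact (hs w hw t₀).1 (hJm _ hz _ hw)
  have stabL : ∀ w ∈ J, ∀ z ∈ J, ∀ s' : WithOne S,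
      s' * (w : WithOne S) = (z : WithOne S) → SG.GreenL z w := by
    intro w hw z hz s' hsz
    rcases hone_or s' with rfl | ⟨s₀, rfl⟩
    · rw [one_mul] at hsz
      obtain rfl : w = z := WithOne.coe_inj.mp hsz
      exact sg_lrefl w
    · have hz' : s₀ * w = z := WithOne.coe_inj.mp (by rw [WithOne.coe_mul]; exact hsz)
      subst hz'
      exact (hs w hw s₀).2 (hJm _ hz _ hw)
  -- an element J-between two elements of J is in J
  have hbetween : ∀ w ∈ J, ∀ c ∈ J, ∀ (z : S) (u v u' v' : WithOne S),
      u * (w : WithOne S) * v = (z : WithOne S) →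
      u' * (z : WithOne S) * v' = (c : WithOne S) → z ∈ J := by
    intro w hw c hc z u v u' v' h1 h2
    refine hmemJ w hw z ⟨⟨u, v, h1⟩, ?_⟩
    obtain ⟨⟨p, q, hpq⟩, -⟩ := hJm c hc w hw
    exact ⟨p * u', v' * q, by rw [← hpq, ← h2]; simp only [mul_assoc]⟩
  -- Claim 1: ν_N ⊆ H
  have claim1 : ∀ a b : S, SG.Nu J N a b → SG.GreenH a b := by
    intro a b hab
    obtain ⟨ha, hb, x, hx, y, hy, s, t, hxa, hyb⟩ := hab
    have hxH := hN.1 hx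
    have hyH := hN.1 hy
    have hxJ := hHsub x hxH
    have hyJ := hHsub y hyH
    obtain ⟨z₁, hz₁⟩ := sg_coeR x t
    obtain ⟨z₂, hz₂⟩ := sg_coeR y t
    have hz₁J : z₁ ∈ J := hbetween x hxJ a ha z₁ 1 t s 1
      (by rw [one_mul]; exact hz₁) (by rw [mul_one, ← hz₁, ← mul_assoc]; exact hxa)
    have hz₂J : z₂ ∈ J := hbetween y hyJ b hb z₂ 1 t s 1
      (by rw [one_mul]; exact hz₂) (by rw [mul_one, ← hz₂, ← mul_assoc]; exact hyb)
    have hz₁Rx : SG.GreenR z₁ x := stabR x hxJ z₁ hz₁J t hz₁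
    have hz₂Ry : SG.GreenR z₂ y := stabR y hyJ z₂ hz₂J t hz₂
    have hxRy : SG.GreenR x y := sg_rtrans hxH.1 (sg_rsymm hyH.1)
    have hz12R : SG.GreenR z₁ z₂ := sg_rtrans hz₁Rx (sg_rtrans hxRy (sg_rsymm hz₂Ry))
    have hxLy : SG.GreenL x y := sg_ltrans hxH.2 (sg_lsymm hyH.2)
    have hz12L : SG.GreenL z₁ z₂ := sg_lcong t hxLy hz₁ hz₂
    have hsza : s * (z₁ : WithOne S) = (a : WithOne S) := by
      rw [← hz₁, ← mul_assoc]; exact hxa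
    have hszb : s * (z₂ : WithOne S) = (b : WithOne S) := by
      rw [← hz₂, ← mul_assoc]; exact hyb
    have haLz₁ : SG.GreenL a z₁ := stabL z₁ hz₁J a ha s hsza
    have hbLz₂ : SG.GreenL b z₂ := stabL z₂ hz₂J b hb s hszb
    have hRab : SG.GreenR a b := sg_rcong s hz12R hsza hszb
    have hLab : SG.GreenL a b := sg_ltrans haLz₁ (sg_ltrans hz12L (sg_lsymm hbLz₂))
    exact ⟨hRab, hLab⟩
  -- Key translation lemma (Green's lemma style)
  have keyA : ∀ y : S, SG.GreenH y e → ∀ (s t : WithOne S) (b : S), b ∈ J →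
      s * (y : WithOne S) * t = (b : WithOne S) →
      ∃ s₁ t₁ : WithOne S, s₁ * (b : WithOne S) * t₁ = (y : WithOne S) ∧
        ∀ c : S, SG.GreenH c b → ∃ g : S, SG.GreenH g e ∧
          s₁ * (c : WithOne S) * t₁ = (g : WithOne S) ∧
          s * (g : WithOne S) * t = (c : WithOne S) := by
    intro y hyH s t b hb hb_eq
    have hyJ := hHsub y hyH
    obtain ⟨z₁, hz₁⟩ := sg_coeR y t
    have hz₁J : z₁ ∈ J := hbetween y hyJ b hb z₁ 1 t s 1
      (by rw [one_mul]; exact hz₁) (by rw [mul_one, ← hz₁, ← mul_assoc]; exact hb_eq)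
    have hz₁Ry : SG.GreenR z₁ y := stabR y hyJ z₁ hz₁J t hz₁
    obtain ⟨t₁, ht₁⟩ := hz₁Ry.1
    have hsz₁ : s * (z₁ : WithOne S) = (b : WithOne S) := by
      rw [← hz₁, ← mul_assoc]; exact hb_eq
    have hbLz₁ : SG.GreenL b z₁ := stabL z₁ hz₁J b hb s hsz₁
    obtain ⟨s₁, hs₁⟩ := hbLz₁.1
    refine ⟨s₁, t₁, by rw [hs₁]; exact ht₁, ?_⟩
    intro c hcH
    have hcJ : c ∈ J := hmemJ b hb c (sg_jsymm (sg_HtoJ hcH))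
    have hcRb : SG.GreenR c b := hcH.1
    have hcLz₁ : SG.GreenL c z₁ := sg_ltrans hcH.2 hbLz₁
    obtain ⟨w, hw⟩ := hcLz₁.2
    have fact1 : (c : WithOne S) * t₁ * t = (c : WithOne S) := by
      rw [← hw, mul_assoc w (z₁ : WithOne S) t₁, ht₁, mul_assoc w (y : WithOne S) t, hz₁]
    obtain ⟨v, hv⟩ := hcRb.2
    have fact2 : s * s₁ * (c : WithOne S) = (c : WithOne S) := by
      rw [← hv, ← mul_assoc (s * s₁) (b : WithOne S) v, mul_assoc s s₁ (b : WithOne S),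
        hs₁, hsz₁]
    obtain ⟨z₃, hz₃⟩ := sg_coeR c t₁
    obtain ⟨g, hg⟩ := sg_coeL z₃ s₁
    have hgc : s * (g : WithOne S) * t = (c : WithOne S) := by
      rw [← hg, ← hz₃]
      simp only [← mul_assoc]
      rw [fact2]; exact fact1
    have hz₃J : z₃ ∈ J := hbetween c hcJ c hcJ z₃ 1 t₁ (s * s₁) t
      (by rw [one_mul]; exact hz₃)
      (by rw [← hz₃]; simp only [← mul_assoc]; rw [fact2]; exact fact1)
    have hgJ : g ∈ J := hbetween z₃ hz₃J c hcJ g s₁ 1 s t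
      (by rw [mul_one]; exact hg) hgc
    have hz₃Rc : SG.GreenR z₃ c := stabR c hcJ z₃ hz₃J t₁ hz₃
    have hgLz₃ : SG.GreenL g z₃ := stabL z₃ hz₃J g hgJ s₁ hg
    have hz₃Ly : SG.GreenL z₃ y := sg_lcong t₁ hcLz₁ hz₃ ht₁
    obtain ⟨z₄, hz₄⟩ := sg_coeL c s₁
    have hz₄Rz₁ : SG.GreenR z₄ z₁ := sg_rcong s₁ hcRb hz₄ hs₁
    have hz₄J : z₄ ∈ J := hmemJ z₁ hz₁J z₄ (sg_jsymm (sg_RtoJ hz₄Rz₁))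
    have hgz₄ : (z₄ : WithOne S) * t₁ = (g : WithOne S) := by
      rw [← hz₄, mul_assoc s₁ (c : WithOne S) t₁, hz₃]; exact hg
    have hgRz₄ : SG.GreenR g z₄ := stabR z₄ hz₄J g hgJ t₁ hgz₄
    have hgH : SG.GreenH g e :=
      ⟨sg_rtrans hgRz₄ (sg_rtrans hz₄Rz₁ (sg_rtrans hz₁Ry hyH.1)),
       sg_ltrans hgLz₃ (sg_ltrans hz₃Ly hyH.2)⟩
    refine ⟨g, hgH, ?_, hgc⟩
    rw [mul_assoc s₁ (c : WithOne S) t₁, hz₃]; exact hg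
  -- the four claims
  refine ⟨claim1, ?_, ?_, ?_⟩
  · -- reflexivity on J
    intro a ha
    obtain ⟨u, v, huv⟩ := (hJm e heJ a ha).1
    exact ⟨ha, ha, e, hN.2.1, e, hN.2.1, u, v, huv, huv⟩
  · -- symmetry
    intro a b hab
    obtain ⟨ha, hb, x, hx, y, hy, s, t, h1, h2⟩ := hab
    exact ⟨hb, ha, y, hy, x, hx, s, t, h2, h1⟩
  · -- transitivity
    intro a b c hab hbc
    obtain ⟨ha, hb, x, hx, y, hy, s, t, hxa, hyb⟩ := hab
    have hcb : SG.GreenH c b := sg_hsymm (claim1 b c hbc)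
    obtain ⟨-, hc, x', hx', y', hy', s', t', hx'b, hy'c⟩ := hbc
    have hyH := hN.1 hy
    have hyJ := hHsub y hyH
    have hx'H := hN.1 hx'
    have hy'H := hN.1 hy'
    obtain ⟨s₁, t₁, hbt, hmap⟩ := keyA y hyH s t b hb hyb
    obtain ⟨g, hgH, hgeq, hgc⟩ := hmap c hcb
    have hgJ := hHsub g hgH
    -- the conjugating translations
    set m : WithOne S := s₁ * s' with hm
    set n : WithOne S := t' * t₁ with hn
    have E_x : m * (x' : WithOne S) * n = (y : WithOne S) := by
      rw [hm, hn, ← hbt, ← hx'b]; simp only [mul_assoc]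
    have E_g : m * (y' : WithOne S) * n = (g : WithOne S) := by
      rw [hm, hn, ← hgeq, ← hy'c]; simp only [mul_assoc]
    obtain ⟨p₁, hp₁⟩ := sg_coeL e m
    obtain ⟨q₁, hq₁⟩ := sg_coeR e n
    set p₀ : S := e * p₁ with hp₀def
    set q₀ : S := q₁ * e with hq₀def
    have hp₀ : (p₀ : WithOne S) = (e : WithOne S) * (m * (e : WithOne S)) := by
      rw [hp₀def, WithOne.coe_mul, hp₁]
    have hq₀ : (q₀ : WithOne S) = ((e : WithOne S) * n) * (e : WithOne S) := by
      rw [hq₀def, WithOne.coe_mul, hq₁]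
    have sandwich : ∀ u v : S, e * u = u → u * e = u → e * v = v → v * e = v →
        m * (u : WithOne S) * n = (v : WithOne S) → p₀ * u * q₀ = v := by
      intro u v heu hue hev hve hmn
      have cue : (u : WithOne S) * (e : WithOne S) = (u : WithOne S) := by
        rw [← WithOne.coe_mul, hue]
      have ceu : (e : WithOne S) * (u : WithOne S) = (u : WithOne S) := by
        rw [← WithOne.coe_mul, heu]
      have cev : (e : WithOne S) * (v : WithOne S) = (v : WithOne S) := by
        rw [← WithOne.coe_mul, hev]
      have cve : (v : WithOne S) * (e : WithOne S) = (v : WithOne S) := by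
        rw [← WithOne.coe_mul, hve]
      apply WithOne.coe_inj.mp
      rw [WithOne.coe_mul, WithOne.coe_mul, hp₀, hq₀]
      simp only [mul_assoc]
      rw [← mul_assoc (u : WithOne S) (e : WithOne S) (n * (e : WithOne S)), cue]
      rw [← mul_assoc (e : WithOne S) (u : WithOne S) (n * (e : WithOne S)), ceu]
      simp only [← mul_assoc]
      rw [mul_assoc (e : WithOne S) m (u : WithOne S),
        mul_assoc (e : WithOne S) (m * (u : WithOne S)) n, hmn, cev, cve]
    obtain ⟨hex', hx'e⟩ := hHid x' hx'H
    obtain ⟨hey', hy'e⟩ := hHid y' hy'H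
    obtain ⟨hey, hye⟩ := hHid y hyH
    obtain ⟨heg, hge⟩ := hHid g hgH
    have E1 : p₀ * x' * q₀ = y := sandwich x' y hex' hx'e hey hye E_x
    have E2 : p₀ * y' * q₀ = g := sandwich y' g hey' hy'e heg hge E_g
    -- p₀ lies in the H-class of e
    have hp₀J : p₀ ∈ J := hbetween e heJ y hyJ p₀ ((e : WithOne S) * m) 1 1
      ((x' * q₀ : S) : WithOne S)
      (by rw [mul_one, mul_assoc, ← hp₀])
      (by rw [one_mul, ← WithOne.coe_mul, ← mul_assoc, E1])
    have hp₀R : SG.GreenR p₀ e := stabR e heJ p₀ hp₀J (m * (e : WithOne S)) hp₀.symm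
    have hp₀L : SG.GreenL p₀ e := stabL e heJ p₀ hp₀J ((e : WithOne S) * m)
      (by rw [mul_assoc, ← hp₀])
    have hp₀H : SG.GreenH p₀ e := ⟨hp₀R, hp₀L⟩
    -- group computation inside H_e using normality of N
    obtain ⟨pi, hpiH, hp₀pi, hpip₀⟩ := hHinv p₀ hp₀H
    obtain ⟨xi, hxiN, hx'xi, hxix'⟩ := hN.2.2.2.1 x' hx'
    have hwN : y' * xi ∈ N := hN.2.2.1 y' hy' xi hxiN
    have conjN : p₀ * (y' * xi) * pi ∈ N :=
      hN.2.2.2.2 p₀ hp₀H pi hpiH hp₀pi hpip₀ (y' * xi) hwN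
    have key2 : (p₀ * (y' * xi) * pi) * y = g := by
      rw [← E1, ← E2]
      simp only [mul_assoc]
      rw [← mul_assoc pi p₀ (x' * q₀), hpip₀]
      rw [← mul_assoc e x' q₀, hex']
      rw [← mul_assoc xi x' q₀, hxix']
      rw [← mul_assoc y' e q₀, hy'e]
    have hgN : g ∈ N := by
      rw [← key2]
      exact hN.2.2.1 _ conjN y hy
    exact ⟨ha, hc, x, hx, g, hgN, s, t, hxa, hgc⟩
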